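/- Let (λ_1,…,λ_p; π_0,π_1,…,π_p) be a spectral system for A, let t_0 ∈ ℕ satisfy A^{t_0}·π_0 = 0, let m ∈ ℕ satisfy (A − λ_j·1)^{m+1}·π_j = 0 for every j, and define X := ∑_{j=1}^{p} ∑_{i=0}^{m} (−1)^i·(λ_j⁻¹)^{i+1} · (A − λ_j·1)^i · π_j. Then X satisfies the three defining equations of the Drazin inverse of A: A^{t_0+1}·X = A^{t_0}, X·A·X = X, and A·X = X·A. -/

import Mathlib

open Finset

section aux
variable {F : Type*} [Field F] {n : Type*} [Fintype n] [DecidableEq n]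

lemma aux_key (A : Matrix n n F) (lam : F) (P : Matrix n n F) (hlam : lam ≠ 0)
    (m : ℕ) (hm : (A - lam • 1) ^ (m + 1) * P = 0) :
    A * (∑ i ∈ Finset.range (m + 1),
        ((-1 : F) ^ i * lam⁻¹ ^ (i + 1)) • ((A - lam • 1) ^ i * P)) = P := by
  set N := A - lam • 1 with hN
  have hA : A = N + lam • 1 := by rw [hN]; abel
  rw [Finset.mul_sum]
  have step : ∀ i ∈ Finset.range (m+1), A * (((-1 : F) ^ i * lam⁻¹ ^ (i + 1)) • (N ^ i * P))
      = (fun i => ((-1:F)^i * lam⁻¹^i) • (N^i * P)) i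
        - (fun i => ((-1:F)^i * lam⁻¹^i) • (N^i * P)) (i+1) := by
    intro i _
    simp only
    rw [hA, add_mul, mul_smul_comm, smul_mul_assoc, ← mul_assoc, ← pow_succ',
      one_mul, smul_smul]
    match_scalars <;> field_simp <;> ring_nf <;> simp [hlam]
  rw [Finset.sum_congr rfl step, Finset.sum_range_sub']
  simp [hm]

end aux

/-- The matrix `X = ∑_j ∑_{i=0}^{m} (-1)^i λ_j^{-(i+1)} (A - λ_j)^i π_j` satisfies the three
defining equations of the Drazin inverse of `A`:
`A^{t₀+1} X = A^{t₀}`, `X A X = X`, and `A X = X A`. -/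
theorem drazin_candidate_satisfies_drazin_equations
    (F : Type*) [Field F] (n : Type*) [Fintype n] [DecidableEq n] [Nonempty n]
    (A : Matrix n n F) (p : ℕ)
    (lam : Fin p → F) (π : Fin (p + 1) → Matrix n n F)
    (hlam : ∀ j, lam j ≠ 0)
    (hsum : ∑ a, π a = 1)
    (horth : ∀ a b, a ≠ b → π a * π b = 0)
    (hidem : ∀ a, π a * π a = π a)
    (hcomm : ∀ a, A * π a = π a * A)
    (t₀ : ℕ) (ht₀ : A ^ t₀ * π 0 = 0)
    (m : ℕ) (hm : ∀ j : Fin p, (A - lam j • 1) ^ (m + 1) * π j.succ = 0) :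
    A ^ (t₀ + 1) * (∑ j : Fin p, ∑ i ∈ Finset.range (m + 1),
        ((-1 : F) ^ i * (lam j)⁻¹ ^ (i + 1)) • ((A - lam j • 1) ^ i * π j.succ)) = A ^ t₀ ∧
    (∑ j : Fin p, ∑ i ∈ Finset.range (m + 1),
        ((-1 : F) ^ i * (lam j)⁻¹ ^ (i + 1)) • ((A - lam j • 1) ^ i * π j.succ)) * A *
      (∑ j : Fin p, ∑ i ∈ Finset.range (m + 1),
        ((-1 : F) ^ i * (lam j)⁻¹ ^ (i + 1)) • ((A - lam j • 1) ^ i * π j.succ)) =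
      (∑ j : Fin p, ∑ i ∈ Finset.range (m + 1),
        ((-1 : F) ^ i * (lam j)⁻¹ ^ (i + 1)) • ((A - lam j • 1) ^ i * π j.succ)) ∧
    A * (∑ j : Fin p, ∑ i ∈ Finset.range (m + 1),
        ((-1 : F) ^ i * (lam j)⁻¹ ^ (i + 1)) • ((A - lam j • 1) ^ i * π j.succ)) =
      (∑ j : Fin p, ∑ i ∈ Finset.range (m + 1),
        ((-1 : F) ^ i * (lam j)⁻¹ ^ (i + 1)) • ((A - lam j • 1) ^ i * π j.succ)) * A := by
  set S : Fin p → Matrix n n F := fun j => ∑ i ∈ Finset.range (m + 1),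
      ((-1 : F) ^ i * (lam j)⁻¹ ^ (i + 1)) • ((A - lam j • 1) ^ i * π j.succ) with hS
  set X : Matrix n n F := ∑ j : Fin p, S j with hX
  -- A * S j = π j.succ
  have hAS : ∀ j, A * S j = π j.succ := fun j => aux_key A (lam j) (π j.succ) (hlam j) m (hm j)
  -- A commutes with X
  have hcN : ∀ j : Fin p, Commute A (A - lam j • 1) := by
    intro j
    exact (Commute.refl A).sub_right (Commute.smul_right (Commute.one_right A) _)
  have hcX : Commute A X := by
    apply Commute.sum_right
    intro j _
    apply Commute.sum_right
    intro i _
    exact (((hcN j).pow_right i).mul_right (hcomm j.succ)).smul_right _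
  have hAX : A * X = ∑ j : Fin p, π j.succ := by
    rw [hX, Finset.mul_sum]
    exact Finset.sum_congr rfl fun j _ => hAS j
  -- ∑ π j.succ = 1 - π 0
  have hsum' : ∑ j : Fin p, π j.succ = 1 - π 0 := by
    rw [Fin.sum_univ_succ] at hsum
    linear_combination (norm := abel) hsum
  refine ⟨?_, ?_, hcX⟩
  · rw [pow_succ, mul_assoc, hAX, hsum', mul_sub, mul_one, ht₀, sub_zero]
  · rw [mul_assoc, hAX, hX, Finset.sum_mul]
    refine Finset.sum_congr rfl fun j _ => ?_
    rw [Finset.mul_sum]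
    have : ∀ k : Fin p, S j * π k.succ = if k = j then S j else 0 := by
      intro k
      rw [hS]
      simp only [Finset.sum_mul, smul_mul_assoc, mul_assoc]
      by_cases hk : k = j
      · subst hk
        simp [hidem]
      · rw [Finset.sum_eq_zero, if_neg hk]
        intro i _
        rw [horth _ _ (by simpa using Ne.symm hk), mul_zero, smul_zero]
    calc ∑ k : Fin p, S j * π k.succ = ∑ k : Fin p, if k = j then S j else 0 := by
          exact Finset.sum_congr rfl fun k _ => this k
      _ = S j := by simp
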